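/- arXiv:2001.08117 — 2 statements merged into one kernel-verified Lean document; each statement's English description precedes it below -/
import Mathlib

section
/- Let p be a prime, s ∈ ℤ_{≥1}, a ∈ ℤ_p ∖ ℤ_{≤0}, and n ≥ 1. Then F_{a,…,a}(t)_{<p^n} ≡ Π_{i=0}^{n−1} [F_{a^{(i)},…,a^{(i)}}(t)_{<p}]^{p^i} mod pℤ_p[t]. -/
open scoped Classical

namespace HGP

/-- `𝔽̄_p`, an algebraic closure of the prime field `𝔽_p`. -/
abbrev Fbar (p : ℕ) [Fact p.Prime] : Type _ := AlgebraicClosure (ZMod p)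

/-- `W = W(𝔽̄_p)`, the ring of Witt vectors of `𝔽̄_p`. -/
abbrev Wp (p : ℕ) [Fact p.Prime] : Type _ := WittVector p (Fbar p)

/-- `K = Frac W`. -/
abbrev Kp (p : ℕ) [Fact p.Prime] : Type _ := FractionRing (Wp p)

/-- The canonical embedding `ℤ_p = W(𝔽_p) → W(𝔽̄_p)`. -/
noncomputable def iota (p : ℕ) [Fact p.Prime] : ℤ_[p] →+* Wp p :=
  (WittVector.map (algebraMap (ZMod p) (Fbar p))).comp (WittVector.equiv p).symm.toRingHom

/-- The canonical embedding `W → K`. -/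
noncomputable def iotaK (p : ℕ) [Fact p.Prime] : Wp p →+* Kp p := algebraMap (Wp p) (Kp p)

/-- `l`: the unique integer in `{0,…,p−1}` with `a + l ≡ 0 mod p`. -/
noncomputable def dl (p : ℕ) [Fact p.Prime] (a : ℤ_[p]) : ℕ := (-a).appr 1

/-- `q := 4` if `p = 2` and `q := p` otherwise. -/
def qq (p : ℕ) : ℕ := if p = 2 then 4 else p

/-- `l′`: the unique integer in `{0,…,q−1}` with `a + l′ ≡ 0 mod q`. -/
noncomputable def dl' (p : ℕ) [Fact p.Prime] (a : ℤ_[p]) : ℕ :=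
  (-a).appr (if p = 2 then 2 else 1)

/-- `e := l′ − ⌊l′/p⌋`. -/
noncomputable def de (p : ℕ) [Fact p.Prime] (a : ℤ_[p]) : ℕ := dl' p a - dl' p a / p

/-- `a ∈ ℤ_p ∖ ℤ_{≤0}`, i.e. `a` is not a nonpositive rational integer. -/
def NotNonposInt (p : ℕ) [Fact p.Prime] (a : ℤ_[p]) : Prop := ∀ n : ℕ, a + (n : ℤ_[p]) ≠ 0

/-- `a′` is the Dwork prime of `a`, i.e. `p·a′ = a + l`. -/
def IsDworkPrime (p : ℕ) [Fact p.Prime] (a a' : ℤ_[p]) : Prop :=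
  (p : ℤ_[p]) * a' = a + (dl p a : ℤ_[p])

/-- `A k = ((a)_k / k!)^s ∈ ℤ_p`, characterized by `k!^s · A k = ((a)_k)^s`. -/
def IsHGCoeff (p : ℕ) [Fact p.Prime] (s : ℕ) (a : ℤ_[p]) (A : ℕ → ℤ_[p]) : Prop :=
  ∀ k : ℕ, (k.factorial : ℤ_[p]) ^ s * A k = ((ascPochhammer ℤ_[p] k).eval a) ^ s

/-- `f = (α ↦ c^α)` for `c ∈ 1 + pW`: `c^α` is uniquely characterized by
`c^α ≡ c^{α_n} mod p^n W` for any natural approximation `α_n` of `α` mod `p^n`. -/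
def IsCpow (p : ℕ) [Fact p.Prime] (c : Wp p) (f : ℤ_[p] → Wp p) : Prop :=
  ∀ (α : ℤ_[p]) (n : ℕ), f α - c ^ (α.appr n) ∈ Ideal.span {(p : Wp p) ^ n}

/-- The coefficients `B_k` of `Ĝ^{(σ)}_{a,…,a}(t)`, as elements of `K = Frac W`:
`B_k = (k+a)⁻¹ (A_k − (−1)^{se} A^{(1)}_{(k−l)/p} c^{(k−l)/p + a′})`. -/
noncomputable def BhatK (p : ℕ) [Fact p.Prime] (s : ℕ) (a a' : ℤ_[p]) (A A1 : ℕ → ℤ_[p])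
    (cpw : ℤ_[p] → Wp p) (k : ℕ) : Kp p :=
  ((k : Kp p) + iotaK p (iota p a))⁻¹ *
    (iotaK p (iota p (A k)) -
      (if dl p a ≤ k ∧ p ∣ (k - dl p a) then
        (-1 : Kp p) ^ (s * de p a) * iotaK p (iota p (A1 ((k - dl p a) / p))) *
          iotaK p (cpw ((((k - dl p a) / p : ℕ) : ℤ_[p]) + a'))
      else 0))

/-- `B : ℕ → W` is the coefficient function of `Ĝ^{(σ)}_{a,…,a}(t)`, characterized in `W` by
`(k+a)·B_k = A_k − (−1)^{se} A^{(1)}_{(k−l)/p} c^{(k−l)/p + a′}`. -/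
def IsBhat (p : ℕ) [Fact p.Prime] (s : ℕ) (a a' : ℤ_[p]) (A A1 : ℕ → ℤ_[p])
    (cpw : ℤ_[p] → Wp p) (B : ℕ → Wp p) : Prop :=
  ∀ k : ℕ, ((k : Wp p) + iota p a) * B k =
    iota p (A k) -
      (if dl p a ≤ k ∧ p ∣ (k - dl p a) then
        (-1 : Wp p) ^ (s * de p a) * iota p (A1 ((k - dl p a) / p)) *
          cpw ((((k - dl p a) / p : ℕ) : ℤ_[p]) + a')
      else 0)

/-- A function `ℕ → K` is Lipschitz: it takes values in `W` and
`p^m ∣ (n − n′)` implies `f n − f n′ ∈ p^m W`. -/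
def LipschitzSeq (p : ℕ) [Fact p.Prime] (f : ℕ → Kp p) : Prop :=
  (∀ n : ℕ, f n ∈ (iotaK p).range) ∧
    ∀ n n' m : ℕ, ((p : ℤ) ^ m ∣ (n : ℤ) - (n' : ℤ)) →
      ∃ w : Wp p, f n - f n' = (p : Kp p) ^ m * iotaK p w

/-- `L` is the `p`-adic limit of the sequence `s` in `W`. -/
def WLim (p : ℕ) [Fact p.Prime] (s : ℕ → Wp p) (L : Wp p) : Prop :=
  ∀ m : ℕ, ∃ M : ℕ, ∀ n ≥ M, L - s n ∈ Ideal.span {(p : Wp p) ^ m}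

/-- `{α}_k := Π_{1 ≤ i ≤ k, p ∤ (α+i−1)} (α+i−1)`. -/
noncomputable def curly (p : ℕ) [Fact p.Prime] (α : ℤ_[p]) (k : ℕ) : ℤ_[p] :=
  ∏ j ∈ Finset.range k, if (p : ℤ_[p]) ∣ (α + (j : ℤ_[p])) then 1 else (α + (j : ℤ_[p]))

/-- `W/p^n W`. -/
abbrev Qn (p : ℕ) [Fact p.Prime] (n : ℕ) := Wp p ⧸ Ideal.span {(p : Wp p) ^ n}

/-- Laurent polynomials over `W/p^n`, obtained from polynomials over `W`. -/
noncomputable def laurentOfPolyW (p : ℕ) [Fact p.Prime] (n : ℕ) :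
    Polynomial (Wp p) →+* LaurentPolynomial (Qn p n) :=
  (Polynomial.toLaurent).comp
    (Polynomial.mapRingHom (Ideal.Quotient.mk (Ideal.span {(p : Wp p) ^ n})))

/-- `R_n := (W/p^n)[t,t⁻¹, h(t)⁻¹]`, the localization of the Laurent polynomial ring
over `W/p^n` away from (the image of) `h`. -/
abbrev Rn (p : ℕ) [Fact p.Prime] (h : Polynomial (Wp p)) (n : ℕ) :=
  Localization.Away (laurentOfPolyW p n h)

/-- The canonical map from Laurent polynomials over `W/p^n` to `R_n`. -/
noncomputable def mkRn (p : ℕ) [Fact p.Prime] (h : Polynomial (Wp p)) (n : ℕ) :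
    LaurentPolynomial (Qn p n) →+* Rn p h n := algebraMap _ _

/-- The canonical map from polynomials over `W` to `R_n`. -/
noncomputable def toRn (p : ℕ) [Fact p.Prime] (h : Polynomial (Wp p)) (n : ℕ) :
    Polynomial (Wp p) →+* Rn p h n := (mkRn p h n).comp (laurentOfPolyW p n)


section DworkAux

variable {p : ℕ} [hp : Fact p.Prime]

lemma toZMod_eq_zero_iff_dvd (x : ℤ_[p]) :
    PadicInt.toZMod x = 0 ↔ (p : ℤ_[p]) ∣ x := by
  rw [← Ideal.mem_span_singleton, ← PadicInt.maximalIdeal_eq_span_p, ← PadicInt.ker_toZMod,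
    RingHom.mem_ker]

lemma dl_lt (a : ℤ_[p]) : dl p a < p := by simpa [dl] using PadicInt.appr_lt (-a) 1

lemma toZMod_add_dl (a a' : ℤ_[p]) (hD : IsDworkPrime p a a') :
    PadicInt.toZMod a = - (dl p a : ZMod p) := by
  have h := (toZMod_eq_zero_iff_dvd _).mpr (⟨a', hD.symm⟩ : (p : ℤ_[p]) ∣ (a + (dl p a : ℤ_[p])))
  rw [map_add, map_natCast] at h
  linear_combination h

lemma asc_eval_prod (a : ℤ_[p]) (k : ℕ) :
    (ascPochhammer ℤ_[p] k).eval a = ∏ j ∈ Finset.range k, (a + (j : ℤ_[p])) := by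
  induction k with
  | zero => simp
  | succ k ih => rw [ascPochhammer_succ_eval, ih, Finset.prod_range_succ]

/-- `if x = 0 then 1 else x`. -/
noncomputable def hfx (p : ℕ) (x : ZMod p) : ZMod p := if x = 0 then 1 else x

/-- the product of `hfx` over all of `ZMod p`. -/
noncomputable def ww (p : ℕ) [Fact p.Prime] : ZMod p := ∏ x : ZMod p, hfx p x

/-- partial products of `hfx` along an arithmetic progression. -/
noncomputable def GG (p : ℕ) [Fact p.Prime] (b : ZMod p) (k : ℕ) : ZMod p :=
  ∏ j ∈ Finset.range k, hfx p ((j : ZMod p) + b)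

lemma hfx_ne_zero (x : ZMod p) : hfx p x ≠ 0 := by
  unfold hfx; split_ifs with h
  · exact one_ne_zero
  · exact h

lemma ww_ne_zero : ww p ≠ 0 := by
  rw [ww, Finset.prod_ne_zero_iff]
  exact fun x _ => hfx_ne_zero x

lemma prod_range_hfx (c : ZMod p) :
    ∏ j ∈ Finset.range p, hfx p ((j : ZMod p) + c) = ww p := by
  have h1 : ∏ j ∈ Finset.range p, hfx p ((j : ZMod p) + c) = ∏ x : ZMod p, hfx p (x + c) := by
    apply Finset.prod_nbij (f := fun j : ℕ => hfx p ((j : ZMod p) + c))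
      (g := fun x : ZMod p => hfx p (x + c)) (i := fun j : ℕ => (j : ZMod p))
    · intro j _; exact Finset.mem_univ _
    · intro j1 h1 j2 h2 he
      simp only [Finset.coe_range, Set.mem_Iio] at h1 h2
      simp only at he
      rw [← ZMod.val_natCast_of_lt h1, ← ZMod.val_natCast_of_lt h2, he]
    · intro x _
      refine ⟨x.val, ?_, ?_⟩
      · simp only [Finset.coe_range, Set.mem_Iio]; exact ZMod.val_lt x
      · exact ZMod.natCast_rightInverse x
    · intro j _; rfl
  rw [h1]
  exact Fintype.prod_equiv (Equiv.addRight c) _ _ (fun x => rfl)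

lemma GG_add (b : ZMod p) (r m : ℕ) : GG p b (p * m + r) = ww p ^ m * GG p b r := by
  induction m with
  | zero => simp [GG]
  | succ m ih =>
    have h : p * (m + 1) + r = (p * m + r) + p := by ring
    rw [GG, h, Finset.prod_range_add, ← GG, ih]
    have h2 : ∏ i ∈ Finset.range p, hfx p (((p * m + r + i : ℕ) : ZMod p) + b) = ww p := by
      rw [← prod_range_hfx (((p * m + r : ℕ) : ZMod p) + b)]
      apply Finset.prod_congr rfl
      intro i _
      congr 1
      push_cast
      ring
    rw [h2]
    ring

lemma GG_eq_prod (b : ZMod p) (r : ℕ) (h : ∀ j < r, (j : ZMod p) + b ≠ 0) :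
    GG p b r = ∏ j ∈ Finset.range r, ((j : ZMod p) + b) := by
  unfold GG
  apply Finset.prod_congr rfl
  intro j hj
  rw [hfx, if_neg (h j (Finset.mem_range.mp hj))]

lemma GG_one_eq_factorial (r : ℕ) (hr : r < p) : GG p 1 r = (r.factorial : ZMod p) := by
  rw [GG_eq_prod]
  · rw [← Finset.prod_range_add_one_eq_factorial r, Nat.cast_prod]
    apply Finset.prod_congr rfl
    intro j _; push_cast; ring
  · intro j hj hc
    have h0 : ((j + 1 : ℕ) : ZMod p) = 0 := by push_cast; linear_combination hc
    rw [ZMod.natCast_eq_zero_iff] at h0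
    have := Nat.le_of_dvd (Nat.succ_pos j) h0
    omega

/-- the sequence `c_k = ∏_{1 ≤ j ≤ k, p ∤ j} j` in `ℤ_p`. -/
noncomputable def ckP (p : ℕ) [Fact p.Prime] (k : ℕ) : ℤ_[p] :=
  ∏ j ∈ Finset.range k, if p ∣ (j + 1) then 1 else ((j : ℤ_[p]) + 1)

lemma factorial_eq (k : ℕ) :
    (k.factorial : ℤ_[p]) = ckP p k * (p : ℤ_[p]) ^ (k / p) * ((k / p).factorial : ℤ_[p]) := by
  induction k with
  | zero => simp [ckP]
  | succ k ih =>
    rw [Nat.factorial_succ, ckP, Finset.prod_range_succ, ← ckP, Nat.succ_div]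
    by_cases h : p ∣ (k + 1)
    · rw [if_pos h, if_pos h, mul_one]
      have hk1 : (k + 1) = p * (k / p + 1) := by
        have h2 : (k + 1) / p = k / p + 1 := by rw [Nat.succ_div, if_pos h]
        have h3 := Nat.mul_div_cancel' h
        rw [h2] at h3
        omega
      rw [Nat.factorial_succ]
      push_cast
      rw [show ((k : ℤ_[p]) + 1) = (p : ℤ_[p]) * ((k / p : ℕ) + 1) by
        exact_mod_cast congrArg (Nat.cast : ℕ → ℤ_[p]) hk1]
      rw [ih]
      push_cast
      ring
    · rw [if_neg h, if_neg h, add_zero]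
      push_cast
      rw [ih]
      ring

lemma ckP_image (k : ℕ) : PadicInt.toZMod (ckP p k) = GG p 1 k := by
  rw [ckP, GG, map_prod]
  apply Finset.prod_congr rfl
  intro j _
  have hz : ((j : ZMod p) + 1 = 0) ↔ p ∣ (j + 1) := by
    rw [show (j : ZMod p) + 1 = ((j + 1 : ℕ) : ZMod p) by push_cast; ring,
      ZMod.natCast_eq_zero_iff]
  by_cases h : p ∣ (j + 1)
  · rw [if_pos h, map_one, hfx, if_pos (hz.mpr h)]
  · rw [if_neg h, hfx, if_neg (fun c => h (hz.mp c)), map_add, map_natCast, map_one]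

lemma curly_image (a : ℤ_[p]) (k : ℕ) :
    PadicInt.toZMod (curly p a k) = GG p (PadicInt.toZMod a) k := by
  rw [curly, GG, map_prod]
  apply Finset.prod_congr rfl
  intro j _
  have hz : ((j : ZMod p) + PadicInt.toZMod a = 0) ↔ (p : ℤ_[p]) ∣ (a + (j : ℤ_[p])) := by
    rw [← toZMod_eq_zero_iff_dvd, map_add, map_natCast]
    constructor <;> intro h <;> linear_combination h
  by_cases h : (p : ℤ_[p]) ∣ (a + (j : ℤ_[p]))
  · rw [if_pos h, map_one, hfx, if_pos (hz.mpr h)]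
  · rw [if_neg h, hfx, if_neg (fun c => h (hz.mp c)), map_add, map_natCast, add_comm]

lemma dvd_iff_mod (a a' : ℤ_[p]) (hD : IsDworkPrime p a a') (k : ℕ) :
    (p : ℤ_[p]) ∣ (a + (k : ℤ_[p])) ↔ k % p = dl p a := by
  rw [← toZMod_eq_zero_iff_dvd, map_add, map_natCast, toZMod_add_dl a a' hD]
  constructor
  · intro h
    have h2 : (k : ZMod p) = (dl p a : ZMod p) := by linear_combination h
    rw [ZMod.natCast_eq_natCast_iff'] at h2
    rwa [Nat.mod_eq_of_lt (dl_lt a)] at h2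
  · intro h
    have h2 : (k : ZMod p) = (dl p a : ZMod p) := by
      rw [ZMod.natCast_eq_natCast_iff', Nat.mod_eq_of_lt (dl_lt a), h]
    rw [h2]; ring

/-- count of `j < k` with `p ∣ a + j`. -/
noncomputable def cnt (p : ℕ) [Fact p.Prime] (a : ℤ_[p]) (k : ℕ) : ℕ :=
  (k + (p - 1 - dl p a)) / p

lemma curly_succ (a : ℤ_[p]) (k : ℕ) :
    curly p a (k + 1) =
      curly p a k * (if (p : ℤ_[p]) ∣ (a + (k : ℤ_[p])) then 1 else (a + (k : ℤ_[p]))) := by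
  rw [curly, Finset.prod_range_succ]; rfl

lemma pochhammer_factor (a a' : ℤ_[p]) (hD : IsDworkPrime p a a') (k : ℕ) :
    (ascPochhammer ℤ_[p] k).eval a =
      curly p a k * (p : ℤ_[p]) ^ cnt p a k * (ascPochhammer ℤ_[p] (cnt p a k)).eval a' := by
  have hlp : dl p a < p := dl_lt a
  induction k with
  | zero =>
    have h0 : cnt p a 0 = 0 := by
      rw [cnt]; apply Nat.div_eq_of_lt; omega
    simp [curly, h0]
  | succ k ih =>
    rw [ascPochhammer_succ_eval, ih, curly_succ]
    by_cases h : (p : ℤ_[p]) ∣ (a + (k : ℤ_[p]))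
    · have hkl : k % p = dl p a := (dvd_iff_mod a a' hD k).mp h
      set t := k / p with ht
      have hk : k = p * t + dl p a := by rw [ht, ← hkl, Nat.div_add_mod]
      have hcnt : cnt p a k = t := by
        rw [cnt, show k + (p - 1 - dl p a) = p * t + (p - 1) by omega,
          Nat.mul_add_div hp.out.pos, Nat.div_eq_of_lt (by omega), add_zero]
      have hcnt1 : cnt p a (k + 1) = t + 1 := by
        rw [cnt, show k + 1 + (p - 1 - dl p a) = p * (t + 1) by rw [Nat.mul_succ]; omega,
          Nat.mul_div_cancel_left _ hp.out.pos]
      have hak : a + (k : ℤ_[p]) = (p : ℤ_[p]) * (a' + (t : ℤ_[p])) := by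
        have hcast : (k : ℤ_[p]) = (p : ℤ_[p]) * (t : ℤ_[p]) + (dl p a : ℤ_[p]) := by
          exact_mod_cast congrArg (Nat.cast : ℕ → ℤ_[p]) hk
        rw [hcast]
        have hD' : (p : ℤ_[p]) * a' = a + (dl p a : ℤ_[p]) := hD
        linear_combination -hD'
      rw [if_pos h, hcnt, hcnt1, ascPochhammer_succ_eval, hak]
      push_cast
      ring
    · have hne : ¬ p ∣ (k + (p - 1 - dl p a) + 1) := by
        intro hc
        apply h
        rw [dvd_iff_mod a a' hD k]
        have h2 : ((k + (p - 1 - dl p a) + 1 : ℕ) : ZMod p) = 0 :=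
          (ZMod.natCast_eq_zero_iff _ _).mpr hc
        have h3 : k + (p - 1 - dl p a) + 1 = k + (p - dl p a) := by omega
        rw [h3] at h2
        push_cast [Nat.cast_sub (le_of_lt hlp)] at h2
        rw [ZMod.natCast_self] at h2
        have h4 : (k : ZMod p) = (dl p a : ZMod p) := by linear_combination h2
        rw [ZMod.natCast_eq_natCast_iff'] at h4
        rwa [Nat.mod_eq_of_lt hlp] at h4
      have hcnt1 : cnt p a (k + 1) = cnt p a k := by
        rw [cnt, cnt, show k + 1 + (p - 1 - dl p a) = (k + (p - 1 - dl p a)) + 1 by omega,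
          Nat.succ_div, if_neg hne, add_zero]
      rw [if_neg h, hcnt1]
      ring

lemma key_congr (s : ℕ) (hs : 1 ≤ s) (a a' : ℤ_[p]) (hD : IsDworkPrime p a a')
    (A A1 : ℕ → ℤ_[p]) (hA : IsHGCoeff p s a A) (hA1 : IsHGCoeff p s a' A1)
    (r m : ℕ) (hr : r < p) :
    PadicInt.toZMod (A (r + p * m)) =
      PadicInt.toZMod (A r) * PadicInt.toZMod (A1 m) := by
  have hp0 : (p : ℤ_[p]) ≠ 0 := Nat.cast_ne_zero.mpr hp.out.ne_zero
  have hmf0 : (m.factorial : ℤ_[p]) ≠ 0 := Nat.cast_ne_zero.mpr m.factorial_ne_zero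
  have hkdiv : (r + p * m) / p = m := by
    rw [Nat.add_mul_div_left _ _ hp.out.pos, Nat.div_eq_of_lt hr, zero_add]
  have hfac : ((r + p * m).factorial : ℤ_[p]) =
      ckP p (r + p * m) * (p : ℤ_[p]) ^ m * (m.factorial : ℤ_[p]) := by
    have h := factorial_eq (p := p) (r + p * m)
    rwa [hkdiv] at h
  have hck : PadicInt.toZMod (ckP p (r + p * m)) = ww p ^ m * (r.factorial : ZMod p) := by
    rw [ckP_image, add_comm r (p * m), GG_add, GG_one_eq_factorial r hr]
  have hfr0 : ((r.factorial : ZMod p)) ≠ 0 := by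
    intro h
    rw [ZMod.natCast_eq_zero_iff] at h
    have := (Nat.Prime.dvd_factorial hp.out).mp h
    omega
  have hs0 : s ≠ 0 := by omega
  have πasc_r : PadicInt.toZMod ((ascPochhammer ℤ_[p] r).eval a) =
      ∏ j ∈ Finset.range r, ((j : ZMod p) + PadicInt.toZMod a) := by
    rw [asc_eval_prod, map_prod]
    apply Finset.prod_congr rfl
    intro j _
    rw [map_add, map_natCast, add_comm]
  have e4 : ((r.factorial : ZMod p)) ^ s * PadicInt.toZMod (A r) =
      (∏ j ∈ Finset.range r, ((j : ZMod p) + PadicInt.toZMod a)) ^ s := by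
    have h := congrArg PadicInt.toZMod (hA r)
    rwa [map_mul, map_pow, map_pow, map_natCast, πasc_r] at h
  by_cases hrl : r ≤ dl p a
  · -- no zero among the first r factors
    have hcnt : cnt p a (r + p * m) = m := by
      have hlp := dl_lt a
      rw [cnt, show r + p * m + (p - 1 - dl p a) = p * m + (r + (p - 1 - dl p a)) by omega,
        Nat.mul_add_div hp.out.pos, Nat.div_eq_of_lt (by omega), add_zero]
    have hP : (ascPochhammer ℤ_[p] (r + p * m)).eval a =
        curly p a (r + p * m) * (p : ℤ_[p]) ^ m * (ascPochhammer ℤ_[p] m).eval a' := by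
      have h := pochhammer_factor a a' hD (r + p * m)
      rwa [hcnt] at h
    have hmain : ckP p (r + p * m) ^ s * A (r + p * m) =
        curly p a (r + p * m) ^ s * A1 m := by
      apply mul_left_cancel₀
        (pow_ne_zero s (mul_ne_zero (pow_ne_zero m hp0) hmf0) :
          ((p : ℤ_[p]) ^ m * (m.factorial : ℤ_[p])) ^ s ≠ 0)
      have e1 := hA (r + p * m)
      rw [hfac, hP] at e1
      have e2 := hA1 m
      linear_combination e1 - (curly p a (r + p * m) * (p : ℤ_[p]) ^ m) ^ s * e2
    have e3 := congrArg PadicInt.toZMod hmain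
    rw [map_mul, map_mul, map_pow, map_pow, hck, curly_image] at e3
    have hGG : GG p (PadicInt.toZMod a) (r + p * m) =
        ww p ^ m * ∏ j ∈ Finset.range r, ((j : ZMod p) + PadicInt.toZMod a) := by
      rw [add_comm r (p * m), GG_add, GG_eq_prod]
      intro j hj hc
      rw [toZMod_add_dl a a' hD] at hc
      have h2 : (j : ZMod p) = (dl p a : ZMod p) := by linear_combination hc
      rw [ZMod.natCast_eq_natCast_iff', Nat.mod_eq_of_lt (lt_of_lt_of_le hj (le_of_lt (lt_of_le_of_lt hrl (dl_lt a)))),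
        Nat.mod_eq_of_lt (dl_lt a)] at h2
      omega
    rw [hGG] at e3
    -- cancel (ww^m * r!)^s
    have hwfr : ((ww p ^ m * (r.factorial : ZMod p)) ^ s) ≠ 0 :=
      pow_ne_zero s (mul_ne_zero (pow_ne_zero m ww_ne_zero) hfr0)
    apply mul_left_cancel₀ hwfr
    linear_combination e3 - (ww p ^ m) ^ s * PadicInt.toZMod (A1 m) * e4
  · -- r > l : both sides vanish
    push_neg at hrl
    have hAr0 : PadicInt.toZMod (A r) = 0 := by
      have hz : (∏ j ∈ Finset.range r, ((j : ZMod p) + PadicInt.toZMod a)) = 0 := by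
        apply Finset.prod_eq_zero (Finset.mem_range.mpr hrl)
        rw [toZMod_add_dl a a' hD]
        ring
      rw [hz, zero_pow hs0] at e4
      exact (mul_eq_zero.mp e4).resolve_left (pow_ne_zero s hfr0)
    have hcnt2 : cnt p a (r + p * m) = m + 1 := by
      have hlp := dl_lt a
      rw [cnt, show r + p * m + (p - 1 - dl p a) = p * (m + 1) + (r - 1 - dl p a) by
          rw [Nat.mul_succ]; omega,
        Nat.mul_add_div hp.out.pos, Nat.div_eq_of_lt (by omega), add_zero]
    have hP2 : (ascPochhammer ℤ_[p] (r + p * m)).eval a =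
        curly p a (r + p * m) * ((p : ℤ_[p]) ^ m * (p : ℤ_[p])) *
          (ascPochhammer ℤ_[p] (m + 1)).eval a' := by
      have h := pochhammer_factor a a' hD (r + p * m)
      rwa [hcnt2, pow_succ] at h
    obtain ⟨μ, hμ⟩ : ∃ μ : ℤ_[p], μ = (m : ℤ_[p]) + 1 := ⟨_, rfl⟩
    have hfacsucc : ((m + 1).factorial : ℤ_[p]) = μ * (m.factorial : ℤ_[p]) := by
      rw [hμ, Nat.factorial_succ]; push_cast; ring
    have hmain2 : ckP p (r + p * m) ^ s * A (r + p * m) =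
        ((p : ℤ_[p]) * (curly p a (r + p * m) * μ)) ^ s * A1 (m + 1) := by
      apply mul_left_cancel₀
        (pow_ne_zero s (mul_ne_zero (pow_ne_zero m hp0) hmf0) :
          ((p : ℤ_[p]) ^ m * (m.factorial : ℤ_[p])) ^ s ≠ 0)
      have e1 := hA (r + p * m)
      rw [hfac, hP2] at e1
      have e2 := hA1 (m + 1)
      rw [hfacsucc] at e2
      linear_combination (norm := ring_nf) e1 - (curly p a (r + p * m) * ((p : ℤ_[p]) ^ m * (p : ℤ_[p]))) ^ s * e2
    have e5 := congrArg PadicInt.toZMod hmain2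
    rw [map_mul, map_pow, hck, map_mul (f := PadicInt.toZMod), map_pow,
      map_mul (f := PadicInt.toZMod), map_natCast, ZMod.natCast_self, zero_mul,
      zero_pow hs0, zero_mul] at e5
    have hAk0 : PadicInt.toZMod (A (r + p * m)) = 0 := by
      refine (mul_eq_zero.mp e5).resolve_left ?_
      exact pow_ne_zero s (mul_ne_zero (pow_ne_zero m ww_ne_zero) hfr0)
    rw [hAk0, hAr0, zero_mul]

lemma expand_eq_pow (f : Polynomial (ZMod p)) :
    Polynomial.expand (ZMod p) p f = f ^ p := by
  have h := Polynomial.map_frobenius_expand p f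
  rwa [ZMod.frobenius_zmod, Polynomial.map_id] at h

lemma split_lemma (A A1 : ℕ → ℤ_[p])
    (key : ∀ r m : ℕ, r < p →
      PadicInt.toZMod (A (r + p * m)) = PadicInt.toZMod (A r) * PadicInt.toZMod (A1 m))
    (n : ℕ) :
    Polynomial.map (PadicInt.toZMod) ((PowerSeries.mk A).trunc (p ^ (n + 1))) =
      Polynomial.map (PadicInt.toZMod) ((PowerSeries.mk A).trunc p) *
        Polynomial.expand (ZMod p) p
          (Polynomial.map (PadicInt.toZMod) ((PowerSeries.mk A1).trunc (p ^ n))) := by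
  ext j
  rw [Polynomial.coeff_map, PowerSeries.coeff_trunc, Polynomial.coeff_mul]
  rw [Finset.sum_eq_single (j % p, p * (j / p))]
  · rw [Polynomial.coeff_expand hp.out.pos, Polynomial.coeff_map, Polynomial.coeff_map,
      PowerSeries.coeff_trunc, PowerSeries.coeff_trunc]
    have h1 : j % p < p := Nat.mod_lt _ hp.out.pos
    rw [if_pos (dvd_mul_right p _), if_pos h1, Nat.mul_div_cancel_left _ hp.out.pos]
    by_cases hj : j < p ^ (n + 1)
    · have hj2 : j / p < p ^ n := by
        rw [Nat.div_lt_iff_lt_mul hp.out.pos]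
        calc j < p ^ (n + 1) := hj
        _ = p ^ n * p := by rw [pow_succ]
      rw [if_pos hj, if_pos hj2]
      simp only [PowerSeries.coeff_mk]
      conv_lhs => rw [show j = j % p + p * (j / p) from (Nat.mod_add_div j p).symm]
      exact key _ _ h1
    · have hj2 : ¬ (j / p < p ^ n) := by
        rw [Nat.div_lt_iff_lt_mul hp.out.pos, ← pow_succ]
        exact hj
      rw [if_neg hj, if_neg hj2, map_zero, mul_zero]
  · rintro ⟨u, v⟩ hb hne
    rw [Finset.HasAntidiagonal.mem_antidiagonal] at hb
    rw [Polynomial.coeff_map, PowerSeries.coeff_trunc]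
    by_cases hu : u < p
    · rw [Polynomial.coeff_expand hp.out.pos]
      rw [if_pos hu]
      by_cases hv : p ∣ v
      · exfalso
        apply hne
        obtain ⟨c, rfl⟩ := hv
        have h5 : u = j % p := by
          rw [← hb, Nat.add_mul_mod_self_left, Nat.mod_eq_of_lt hu]
        have h6 : c = j / p := by
          rw [← hb, h5]
          rw [Nat.add_mul_div_left _ _ hp.out.pos, Nat.div_eq_of_lt (Nat.mod_lt _ hp.out.pos),
            zero_add]
        rw [h5, h6]
      · rw [if_neg hv, mul_zero]
    · rw [if_neg hu, map_zero, zero_mul]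
  · intro hmem
    exfalso
    apply hmem
    rw [Finset.HasAntidiagonal.mem_antidiagonal]
    exact Nat.mod_add_div j p

lemma main_poly (s : ℕ) (hs : 1 ≤ s) (n : ℕ) :
    ∀ (as : ℕ → ℤ_[p]) (AF : ℕ → ℕ → ℤ_[p]),
      (∀ i, IsDworkPrime p (as i) (as (i + 1))) → (∀ i, IsHGCoeff p s (as i) (AF i)) →
      Polynomial.map (PadicInt.toZMod) ((PowerSeries.mk (AF 0)).trunc (p ^ n)) =
        ∏ i ∈ Finset.range n,
          (Polynomial.map (PadicInt.toZMod) ((PowerSeries.mk (AF i)).trunc p)) ^ (p ^ i) := by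
  induction n with
  | zero =>
    intro as AF hD hA
    rw [Finset.range_zero, Finset.prod_empty, pow_zero]
    have h0 : AF 0 0 = 1 := by
      have h := hA 0 0
      simpa using h
    ext j
    rw [Polynomial.coeff_map, PowerSeries.coeff_trunc]
    by_cases hj : j < 1
    · have : j = 0 := by omega
      subst this
      rw [if_pos (by norm_num), PowerSeries.coeff_mk, h0, map_one, Polynomial.coeff_one]
      norm_num
    · rw [if_neg hj, map_zero, Polynomial.coeff_one, if_neg (by omega)]
  | succ n ih =>
    intro as AF hD hA
    have hkey : ∀ r m : ℕ, r < p →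
        PadicInt.toZMod (AF 0 (r + p * m)) =
          PadicInt.toZMod (AF 0 r) * PadicInt.toZMod (AF 1 m) :=
      fun r m hr => key_congr s hs (as 0) (as 1) (hD 0) (AF 0) (AF 1) (hA 0) (hA 1) r m hr
    rw [split_lemma (AF 0) (AF 1) hkey n,
      ih (fun i => as (i + 1)) (fun i => AF (i + 1)) (fun i => hD (i + 1)) (fun i => hA (i + 1)),
      map_prod, Finset.prod_range_succ', pow_zero, pow_one, mul_comm]
    congr 1
    apply Finset.prod_congr rfl
    intro i _
    rw [map_pow, expand_eq_pow, ← pow_mul, ← pow_succ']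

end DworkAux

/-- `F_{a,…,a}(t)_{<p^n} ≡ Π_{i=0}^{n−1} [F_{a^{(i)},…,a^{(i)}}(t)_{<p}]^{p^i}
mod p ℤ_p[t]`. -/
theorem statement5 (p : ℕ) [Fact p.Prime] (s : ℕ) (hs : 1 ≤ s)
    (a : ℤ_[p]) (ha : NotNonposInt p a)
    (as : ℕ → ℤ_[p]) (has0 : as 0 = a) (hasD : ∀ i, IsDworkPrime p (as i) (as (i + 1)))
    (AF : ℕ → ℕ → ℤ_[p]) (hAF : ∀ i, IsHGCoeff p s (as i) (AF i))
    (n : ℕ) (hn : 1 ≤ n) :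
    ∀ m : ℕ,
      Polynomial.coeff
        ((PowerSeries.mk (AF 0)).trunc (p ^ n) -
          ∏ i ∈ Finset.range n, ((PowerSeries.mk (AF i)).trunc p) ^ (p ^ i)) m
        ∈ Ideal.span {(p : ℤ_[p])} := by
  intro m
  have hmain := main_poly (p := p) s hs n as AF hasD hAF
  rw [← PadicInt.maximalIdeal_eq_span_p, ← PadicInt.ker_toZMod]
  apply RingHom.mem_ker.mpr
  have hcoeff : PadicInt.toZMod (Polynomial.coeff
      ((PowerSeries.mk (AF 0)).trunc (p ^ n) -
        ∏ i ∈ Finset.range n, ((PowerSeries.mk (AF i)).trunc p) ^ (p ^ i)) m) =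
      (Polynomial.map PadicInt.toZMod
        ((PowerSeries.mk (AF 0)).trunc (p ^ n) -
          ∏ i ∈ Finset.range n, ((PowerSeries.mk (AF i)).trunc p) ^ (p ^ i))).coeff m :=
    (Polynomial.coeff_map _ _).symm
  rw [hcoeff, Polynomial.map_sub]
  have hprod : Polynomial.map PadicInt.toZMod
      (∏ i ∈ Finset.range n, ((PowerSeries.mk (AF i)).trunc p) ^ (p ^ i)) =
      ∏ i ∈ Finset.range n,
        (Polynomial.map PadicInt.toZMod ((PowerSeries.mk (AF i)).trunc p)) ^ (p ^ i) := by
    simp [Polynomial.map_prod, Polynomial.map_pow]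
  rw [hprod, hmain, sub_self, Polynomial.coeff_zero]

end HGP
end

section
/- Let p be a prime and c ∈ 1+qW. Define f: ℤ_{≥1} → K by f(n) := (c^{n/p} − 1)/n if p | n, and f(n) := 0 if p ∤ n. Then f(n) ∈ W for every n ≥ 1, and for all n₁, n₂ ∈ ℤ_{≥1} and m ∈ ℤ_{≥0}, p^m | (n₁ − n₂) implies f(n₁) − f(n₂) ∈ p^m W. -/
open scoped Classical

namespace HGP

section Statement8Aux

variable (p : ℕ) [hp : Fact p.Prime]

lemma iota_injective : Function.Injective (iota p) := by
  have h1 : Function.Injective (WittVector.map (p := p) (algebraMap (ZMod p) (Fbar p))) :=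
    WittVector.map_injective _ (algebraMap (ZMod p) (Fbar p)).injective
  have h2 := (WittVector.equiv p).symm.injective
  intro a b hab
  unfold iota at hab
  simp only [RingHom.coe_comp, Function.comp_apply, RingEquiv.toRingHom_eq_coe,
    RingHom.coe_coe] at hab
  exact h2 (h1 hab)

instance charZero_Wp : CharZero (Wp p) := by
  refine ⟨fun a b h => ?_⟩
  have hab : iota p ((a : ℕ) : ℤ_[p]) = iota p ((b : ℕ) : ℤ_[p]) := by
    rw [map_natCast, map_natCast, h]
  exact_mod_cast iota_injective p hab

lemma isUnit_natCast_Wp (n : ℕ) (h : ¬ p ∣ n) : IsUnit ((n : Wp p)) := by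
  have h1 : IsUnit ((n : ℤ_[p])) := by
    rw [PadicInt.isUnit_iff]
    refine le_antisymm (PadicInt.norm_le_one _) ?_
    by_contra hlt
    push_neg at hlt
    have h2 : ‖((n : ℤ) : ℤ_[p])‖ < 1 := by push_cast; exact hlt
    have h3 := (PadicInt.norm_int_lt_one_iff_dvd (n : ℤ)).mp h2
    exact h (by exact_mod_cast h3)
  have h2 := h1.map (iota p)
  rwa [map_natCast] at h2

lemma natCast_eq_pow_mul (n : ℕ) :
    (n : Wp p) = (p : Wp p) ^ (n.factorization p) * ((ordCompl[p] n : ℕ) : Wp p) := by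
  conv_lhs => rw [← Nat.ordProj_mul_ordCompl_eq_self n p]
  push_cast
  ring

lemma pow_dvd_cancel (i r : ℕ) (hi : i ≠ 0) (X : Wp p)
    (h : (p : Wp p) ^ (i.factorization p + r) ∣ (i : Wp p) * X) :
    (p : Wp p) ^ r ∣ X := by
  have hu : IsUnit ((ordCompl[p] i : ℕ) : Wp p) :=
    isUnit_natCast_Wp p _ (Nat.not_dvd_ordCompl hp.out hi)
  obtain ⟨z, hz⟩ := h
  have hpB : ((p : Wp p)) ^ (i.factorization p) ≠ 0 :=
    pow_ne_zero _ (Nat.cast_ne_zero.mpr hp.out.ne_zero)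
  have h2 : (p : Wp p) ^ (i.factorization p) * (((ordCompl[p] i : ℕ) : Wp p) * X)
      = (p : Wp p) ^ (i.factorization p) * ((p : Wp p) ^ r * z) := by
    rw [← mul_assoc, ← natCast_eq_pow_mul, hz, pow_add, mul_assoc]
  have hz' := mul_left_cancel₀ hpB h2
  have h3 : (p : Wp p) ^ r ∣ ((ordCompl[p] i : ℕ) : Wp p) * X := ⟨z, hz'⟩
  rwa [hu.dvd_mul_left] at h3

lemma qq_eq : qq p = p ^ (if p = 2 then 2 else 1) := by
  by_cases h : p = 2 <;> simp [qq, h]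

lemma two_mul_add_one_le_three_pow (x : ℕ) : 2 * x + 1 ≤ 3 ^ x := by
  induction x with
  | zero => norm_num
  | succ n ih =>
    have h3 : 3 * (2 * n + 1) ≤ 3 * 3 ^ n := Nat.mul_le_mul_left 3 ih
    rw [pow_succ]
    omega

lemma num1 (i b : ℕ) (hb : p ^ b ∣ i) (hi : i ≠ 0) :
    b + 1 ≤ (if p = 2 then 2 else 1) * i := by
  have hbi : p ^ b ≤ i := Nat.le_of_dvd (Nat.pos_of_ne_zero hi) hb
  have h1 : b < 2 ^ b := (Nat.lt_two_pow_self (n := b))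
  have h2 : 2 ^ b ≤ p ^ b := Nat.pow_le_pow_left hp.out.two_le b
  split_ifs <;> omega

lemma num2 (i t b c' : ℕ) (hb : p ^ b ∣ i) (hc : p ^ c' ∣ t) (ht : t ≠ 0) (hti : t < i) :
    b + c' + 2 ≤ (if p = 2 then 2 else 1) * i := by
  have hi : i ≠ 0 := by omega
  have hbi : p ^ b ≤ i := Nat.le_of_dvd (Nat.pos_of_ne_zero hi) hb
  have hct : p ^ c' ≤ t := Nat.le_of_dvd (Nat.pos_of_ne_zero ht) hc
  rcases eq_or_ne p 2 with h2 | h2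
  · subst h2
    have e1 : b < 2 ^ b := (Nat.lt_two_pow_self (n := b))
    have e2 : c' < 2 ^ c' := (Nat.lt_two_pow_self (n := c'))
    norm_num
    omega
  · have hp3 : 3 ≤ p := by
      have := hp.out.two_le
      omega
    have e1 : 3 ^ b ≤ p ^ b := Nat.pow_le_pow_left hp3 b
    have e2 : 3 ^ c' ≤ p ^ c' := Nat.pow_le_pow_left hp3 c'
    have f1 := two_mul_add_one_le_three_pow b
    have f2 := two_mul_add_one_le_three_pow c'
    simp only [if_neg h2]
    omega

lemma key_dvd_A (k i : ℕ) (hk : k ≠ 0) (hi : i ≠ 0) :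
    (p : Wp p) * (k : Wp p) ∣ (k.choose i : Wp p) * (qq p : Wp p) ^ i := by
  have hnat : p ^ (i.factorization p + (1 + k.factorization p))
      ∣ i * (k.choose i * qq p ^ i) := by
    have hid : i * (k.choose i * qq p ^ i) = (k * (k - 1).choose (i - 1)) * qq p ^ i := by
      obtain ⟨k', rfl⟩ : ∃ k', k = k' + 1 := ⟨k - 1, by omega⟩
      obtain ⟨i', rfl⟩ : ∃ i', i = i' + 1 := ⟨i - 1, by omega⟩
      simp only [Nat.add_sub_cancel]
      have hs := Nat.add_one_mul_choose_eq k' i'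
      rw [hs]; ring
    rw [hid]
    have h1 : p ^ (k.factorization p) ∣ k := Nat.ordProj_dvd k p
    have h2 : p ^ (i.factorization p + 1) ∣ qq p ^ i := by
      rw [qq_eq p, ← pow_mul]
      exact pow_dvd_pow p (num1 p i (i.factorization p) (Nat.ordProj_dvd i p) hi)
    calc p ^ (i.factorization p + (1 + k.factorization p))
        = p ^ (k.factorization p) * p ^ (i.factorization p + 1) := by
          rw [← pow_add]; congr 1; omega
      _ ∣ k * qq p ^ i := mul_dvd_mul h1 h2
      _ ∣ (k * (k - 1).choose (i - 1)) * qq p ^ i := by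
          rw [mul_assoc k, mul_comm ((k - 1).choose (i - 1)), ← mul_assoc]
          exact dvd_mul_right _ _
  have hW : (p : Wp p) ^ (i.factorization p + (1 + k.factorization p))
      ∣ (i : Wp p) * ((k.choose i : Wp p) * (qq p : Wp p) ^ i) := by
    have h4 := Nat.cast_dvd_cast (α := Wp p) hnat
    push_cast at h4
    exact h4
  have h3 : (p : Wp p) ^ (1 + k.factorization p)
      ∣ (k.choose i : Wp p) * (qq p : Wp p) ^ i :=
    pow_dvd_cancel p i _ hi _ hW
  have hu : IsUnit ((ordCompl[p] k : ℕ) : Wp p) :=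
    isUnit_natCast_Wp p _ (Nat.not_dvd_ordCompl hp.out hk)
  have hfac : (p : Wp p) * (k : Wp p)
      = (p : Wp p) ^ (1 + k.factorization p) * ((ordCompl[p] k : ℕ) : Wp p) := by
    rw [natCast_eq_pow_mul p k, pow_add, pow_one]; ring
  rw [hfac, hu.mul_right_dvd]
  exact h3

lemma cpow_sub_one (u c : Wp p) (hc : c = 1 + (qq p : Wp p) * u) (k M : ℕ) (hk : k ≤ M) :
    c ^ k - 1 = ∑ i ∈ (Finset.range (M + 1)).erase 0,
      (k.choose i : Wp p) * ((qq p : Wp p) * u) ^ i := by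
  have h1 : c ^ k = ∑ i ∈ Finset.range (k + 1),
      (k.choose i : Wp p) * ((qq p : Wp p) * u) ^ i := by
    rw [hc, add_comm (1 : Wp p), add_pow]
    refine Finset.sum_congr rfl fun i _ => ?_
    rw [one_pow, mul_one, mul_comm]
  have h2 : c ^ k = ∑ i ∈ Finset.range (M + 1),
      (k.choose i : Wp p) * ((qq p : Wp p) * u) ^ i := by
    rw [h1]
    apply Finset.sum_subset (Finset.range_subset_range.mpr (by omega))
    intro i hiM hik
    have hki : k < i := by
      simp only [Finset.mem_range] at hiM hik
      omega
    rw [Nat.choose_eq_zero_of_lt hki]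
    simp
  rw [h2, ← Finset.add_sum_erase _ _ (Finset.mem_range.mpr (Nat.succ_pos M))]
  simp

lemma lemA (u c : Wp p) (hc : c = 1 + (qq p : Wp p) * u) (k : ℕ) (hk : k ≠ 0) :
    (p : Wp p) * (k : Wp p) ∣ c ^ k - 1 := by
  rw [cpow_sub_one p u c hc k k le_rfl]
  apply Finset.dvd_sum
  intro i hi
  have hi0 : i ≠ 0 := Finset.ne_of_mem_erase hi
  have hx : (k.choose i : Wp p) * ((qq p : Wp p) * u) ^ i
      = ((k.choose i : Wp p) * (qq p : Wp p) ^ i) * u ^ i := by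
    rw [mul_pow]; ring
  rw [hx]
  exact (key_dvd_A p k i hk hi0).mul_right _

lemma vander (K D j : ℕ) :
    (K + D).choose j = (∑ x ∈ Finset.range j, K.choose x * D.choose (j - x)) + K.choose j := by
  rw [Nat.add_choose_eq, Finset.Nat.sum_antidiagonal_eq_sum_range_succ_mk,
    Finset.sum_range_succ]
  simp

lemma I1 (K D j : ℕ) :
    (j + 1) * ((K + 1) * ((K + 1 + D).choose (j + 1)))
      = (j + 1) * ((K + 1 + D) * ((K + 1).choose (j + 1)))
        + (K + 1 + D) * ((K + 1) * ∑ x ∈ Finset.range j, K.choose x * D.choose (j - x)) := by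
  have e : K + 1 + D = K + D + 1 := by omega
  rw [e]
  have h1 : (K + D + 1) * ((K + D).choose j) = (K + D + 1).choose (j + 1) * (j + 1) := by
    simpa using Nat.add_one_mul_choose_eq (K + D) j
  have h2 : (K + 1) * (K.choose j) = (K + 1).choose (j + 1) * (j + 1) := by
    simpa using Nat.add_one_mul_choose_eq K j
  have h3 := vander K D j
  calc (j + 1) * ((K + 1) * ((K + D + 1).choose (j + 1)))
      = (K + 1) * ((K + D + 1).choose (j + 1) * (j + 1)) := by ring
    _ = (K + 1) * ((K + D + 1) * ((K + D).choose j)) := by rw [h1]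
    _ = (K + 1) * ((K + D + 1) *
          ((∑ x ∈ Finset.range j, K.choose x * D.choose (j - x)) + K.choose j)) := by rw [h3]
    _ = (K + D + 1) * ((K + 1) * (K.choose j))
        + (K + D + 1) * ((K + 1) * ∑ x ∈ Finset.range j, K.choose x * D.choose (j - x)) := by
          ring
    _ = (K + D + 1) * ((K + 1).choose (j + 1) * (j + 1))
        + (K + D + 1) * ((K + 1) * ∑ x ∈ Finset.range j, K.choose x * D.choose (j - x)) := by
          rw [h2]
    _ = (j + 1) * ((K + D + 1) * ((K + 1).choose (j + 1)))
        + (K + D + 1) * ((K + 1) * ∑ x ∈ Finset.range j, K.choose x * D.choose (j - x)) := by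
          ring

lemma key_dvd_B (D t i m' : ℕ) (ht : t ≠ 0) (hti : t < i) (hD : p ^ m' ∣ D) :
    (p : Wp p) ^ (i.factorization p + (m' + 2)) ∣ (D.choose t : Wp p) * (qq p : Wp p) ^ i := by
  rcases Nat.eq_zero_or_pos D with rfl | hD0
  · rw [Nat.choose_eq_zero_of_lt (by omega : (0 : ℕ) < t)]
    simp
  apply pow_dvd_cancel p t _ ht
  have hnat : p ^ (t.factorization p + (i.factorization p + (m' + 2)))
      ∣ t * (D.choose t * qq p ^ i) := by
    have hid : t * (D.choose t * qq p ^ i) = (D * (D - 1).choose (t - 1)) * qq p ^ i := by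
      obtain ⟨D', rfl⟩ : ∃ D', D = D' + 1 := ⟨D - 1, by omega⟩
      obtain ⟨t', rfl⟩ : ∃ t', t = t' + 1 := ⟨t - 1, by omega⟩
      simp only [Nat.add_sub_cancel]
      have hs := Nat.add_one_mul_choose_eq D' t'
      rw [hs]; ring
    rw [hid]
    have h2 : p ^ (t.factorization p + i.factorization p + 2) ∣ qq p ^ i := by
      rw [qq_eq p, ← pow_mul]
      apply pow_dvd_pow p
      have hnn := num2 p i t (i.factorization p) (t.factorization p)
        (Nat.ordProj_dvd i p) (Nat.ordProj_dvd t p) ht hti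
      set E := (if p = 2 then 2 else 1) * i with hE
      omega
    calc p ^ (t.factorization p + (i.factorization p + (m' + 2)))
        = p ^ m' * p ^ (t.factorization p + i.factorization p + 2) := by
          rw [← pow_add]; congr 1; omega
      _ ∣ D * qq p ^ i := mul_dvd_mul hD h2
      _ ∣ (D * (D - 1).choose (t - 1)) * qq p ^ i := by
          rw [mul_assoc D, mul_comm ((D - 1).choose (t - 1)), ← mul_assoc]
          exact dvd_mul_right _ _
  have h4 := Nat.cast_dvd_cast (α := Wp p) hnat
  push_cast at h4
  exact h4

lemma lemB (u c : Wp p) (hc : c = 1 + (qq p : Wp p) * u) (k₁ k₂ m' : ℕ)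
    (hk₂ : k₂ ≠ 0) (hle : k₂ ≤ k₁) (hD : p ^ m' ∣ k₁ - k₂) :
    (p : Wp p) ^ (m' + 1) * ((p : Wp p) * (k₁ : Wp p) * (k₂ : Wp p)) ∣
      (k₂ : Wp p) * (c ^ k₁ - 1) - (k₁ : Wp p) * (c ^ k₂ - 1) := by
  obtain ⟨K, rfl⟩ : ∃ K, k₂ = K + 1 := ⟨k₂ - 1, by omega⟩
  obtain ⟨D, rfl⟩ : ∃ D, k₁ = K + 1 + D := ⟨k₁ - (K + 1), by omega⟩
  have hD' : p ^ m' ∣ D := by simpa using hD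
  rw [cpow_sub_one p u c hc (K + 1 + D) (K + 1 + D) le_rfl,
    cpow_sub_one p u c hc (K + 1) (K + 1 + D) hle,
    Finset.mul_sum, Finset.mul_sum, ← Finset.sum_sub_distrib]
  apply Finset.dvd_sum
  intro i hi
  obtain ⟨j, rfl⟩ : ∃ j, i = j + 1 := ⟨i - 1, by
    have := Finset.ne_of_mem_erase hi; omega⟩
  have hSd : (p : Wp p) ^ ((j + 1).factorization p + (m' + 2)) ∣
      ((∑ x ∈ Finset.range j, K.choose x * D.choose (j - x) : ℕ) : Wp p)
        * (qq p : Wp p) ^ (j + 1) := by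
    push_cast
    rw [Finset.sum_mul]
    apply Finset.dvd_sum
    intro x hx
    have hx' : x < j := Finset.mem_range.mp hx
    have hkey := key_dvd_B p D (j - x) (j + 1) m' (by omega) (by omega) hD'
    rw [mul_assoc]
    exact hkey.mul_left _
  have hI : ((j + 1 : ℕ) : Wp p) *
        ((((K + 1 : ℕ) : Wp p) * ((K + 1 + D).choose (j + 1) : Wp p)
          - ((K + 1 + D : ℕ) : Wp p) * (((K + 1).choose (j + 1) : ℕ) : Wp p))
          * (qq p : Wp p) ^ (j + 1))
      = ((K + 1 + D : ℕ) : Wp p) * ((K + 1 : ℕ) : Wp p) *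
          (((∑ x ∈ Finset.range j, K.choose x * D.choose (j - x) : ℕ) : Wp p)
            * (qq p : Wp p) ^ (j + 1)) := by
    have hcast := congrArg (Nat.cast : ℕ → Wp p) (I1 K D j)
    push_cast at hcast ⊢
    linear_combination (qq p : Wp p) ^ (j + 1) * hcast
  have hg : (p : Wp p) ^ ((K + 1 + D).factorization p + (K + 1).factorization p + (m' + 2)) ∣
      (((K + 1 : ℕ) : Wp p) * ((K + 1 + D).choose (j + 1) : Wp p)
        - ((K + 1 + D : ℕ) : Wp p) * (((K + 1).choose (j + 1) : ℕ) : Wp p))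
        * (qq p : Wp p) ^ (j + 1) := by
    apply pow_dvd_cancel p (j + 1) _ (by omega)
    rw [hI]
    have h1 : (p : Wp p) ^ ((K + 1 + D).factorization p) ∣ ((K + 1 + D : ℕ) : Wp p) := by
      rw [natCast_eq_pow_mul p (K + 1 + D)]; exact dvd_mul_right _ _
    have h2 : (p : Wp p) ^ ((K + 1).factorization p) ∣ ((K + 1 : ℕ) : Wp p) := by
      rw [natCast_eq_pow_mul p (K + 1)]; exact dvd_mul_right _ _
    have he : (j + 1).factorization p
          + ((K + 1 + D).factorization p + (K + 1).factorization p + (m' + 2))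
        = ((K + 1 + D).factorization p + (K + 1).factorization p)
          + ((j + 1).factorization p + (m' + 2)) := by omega
    rw [he, pow_add, pow_add]
    exact mul_dvd_mul (mul_dvd_mul h1 h2) hSd
  have hterm : ((K + 1 : ℕ) : Wp p) * (((K + 1 + D).choose (j + 1) : Wp p)
        * ((qq p : Wp p) * u) ^ (j + 1))
      - ((K + 1 + D : ℕ) : Wp p) * ((((K + 1).choose (j + 1) : ℕ) : Wp p)
        * ((qq p : Wp p) * u) ^ (j + 1))
      = ((((K + 1 : ℕ) : Wp p) * ((K + 1 + D).choose (j + 1) : Wp p)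
          - ((K + 1 + D : ℕ) : Wp p) * (((K + 1).choose (j + 1) : ℕ) : Wp p))
          * (qq p : Wp p) ^ (j + 1)) * u ^ (j + 1) := by
    rw [mul_pow]; ring
  have hu1 : IsUnit ((ordCompl[p] (K + 1 + D) : ℕ) : Wp p) :=
    isUnit_natCast_Wp p _ (Nat.not_dvd_ordCompl hp.out (by omega))
  have hu2 : IsUnit ((ordCompl[p] (K + 1) : ℕ) : Wp p) :=
    isUnit_natCast_Wp p _ (Nat.not_dvd_ordCompl hp.out (by omega))
  have hdiv : (p : Wp p) ^ (m' + 1)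
        * ((p : Wp p) * ((K + 1 + D : ℕ) : Wp p) * ((K + 1 : ℕ) : Wp p))
      = (p : Wp p) ^ ((K + 1 + D).factorization p + (K + 1).factorization p + (m' + 2))
        * (((ordCompl[p] (K + 1 + D) : ℕ) : Wp p) * ((ordCompl[p] (K + 1) : ℕ) : Wp p)) := by
    rw [natCast_eq_pow_mul p (K + 1 + D), natCast_eq_pow_mul p (K + 1)]
    rw [show (K + 1 + D).factorization p + (K + 1).factorization p + (m' + 2)
        = (m' + 1) + (1 + ((K + 1 + D).factorization p + (K + 1).factorization p)) by omega]
    rw [pow_add, pow_add, pow_add, pow_one]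
    ring
  calc (p : Wp p) ^ (m' + 1) * ((p : Wp p) * ((K + 1 + D : ℕ) : Wp p) * ((K + 1 : ℕ) : Wp p))
      = (p : Wp p) ^ ((K + 1 + D).factorization p + (K + 1).factorization p + (m' + 2))
        * (((ordCompl[p] (K + 1 + D) : ℕ) : Wp p)
          * ((ordCompl[p] (K + 1) : ℕ) : Wp p)) := hdiv
    _ ∣ _ := by
        rw [(hu1.mul hu2).mul_right_dvd, hterm]
        exact hg.mul_right _

lemma lemC (u c : Wp p) (hc : c = 1 + (qq p : Wp p) * u) (k₁ k₂ m' : ℕ)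
    (hk₁ : k₁ ≠ 0) (hk₂ : k₂ ≠ 0) (hle : k₂ ≤ k₁)
    (hD : p ^ m' ∣ k₁ - k₂) (w₁ w₂ : Wp p)
    (hw₁ : c ^ k₁ - 1 = (p : Wp p) * (k₁ : Wp p) * w₁)
    (hw₂ : c ^ k₂ - 1 = (p : Wp p) * (k₂ : Wp p) * w₂) :
    ∃ z : Wp p, w₁ - w₂ = (p : Wp p) ^ (m' + 1) * z := by
  obtain ⟨z, hz⟩ := lemB p u c hc k₁ k₂ m' hk₂ hle hD
  refine ⟨z, ?_⟩
  have hne : (p : Wp p) * (k₁ : Wp p) * (k₂ : Wp p) ≠ 0 := by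
    have h0 : ((p * k₁ * k₂ : ℕ) : Wp p) ≠ 0 :=
      Nat.cast_ne_zero.mpr (Nat.mul_ne_zero (Nat.mul_ne_zero hp.out.ne_zero hk₁) hk₂)
    push_cast at h0
    exact h0
  apply mul_left_cancel₀ hne
  rw [hw₁, hw₂] at hz
  linear_combination hz

/-- The function of Statement 8, as a top-level definition. -/
noncomputable def F8 (p : ℕ) [Fact p.Prime] (c : Wp p) : ℕ → Kp p :=
  fun n => if p ∣ n then (iotaK p (c ^ (n / p)) - 1) / (n : Kp p) else 0

lemma natCast_Kp_ne_zero (n : ℕ) (hn : n ≠ 0) : (n : Kp p) ≠ 0 := by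
  have h1 : ((n : Wp p)) ≠ 0 := Nat.cast_ne_zero.mpr hn
  intro h
  apply h1
  apply IsFractionRing.injective (Wp p) (Kp p)
  rw [map_natCast, map_zero]
  exact h

lemma F8_spec (u c : Wp p) (hc : c = 1 + (qq p : Wp p) * u) (n : ℕ) (hn : n ≠ 0)
    (hpn : p ∣ n) :
    ∃ w : Wp p, c ^ (n / p) - 1 = (p : Wp p) * ((n / p : ℕ) : Wp p) * w ∧
      F8 p c n = iotaK p w := by
  have hk : n / p ≠ 0 := by
    have := Nat.div_pos (Nat.le_of_dvd (Nat.pos_of_ne_zero hn) hpn) hp.out.pos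
    omega
  obtain ⟨w, hw⟩ := lemA p u c hc (n / p) hk
  refine ⟨w, hw, ?_⟩
  have hnp : p * (n / p) = n := Nat.mul_div_cancel' hpn
  have h3 : (n : Kp p) = (p : Kp p) * ((n / p : ℕ) : Kp p) := by
    conv_lhs => rw [← hnp]
    rw [Nat.cast_mul]
  have h2 := congrArg (iotaK p) hw
  rw [map_sub, map_one, map_mul, map_mul, map_natCast, map_natCast] at h2
  have key : iotaK p (c ^ (n / p)) - 1 = (n : Kp p) * iotaK p w := by
    rw [h2, h3]
  rw [F8, if_pos hpn, key, mul_div_cancel_left₀ _ (natCast_Kp_ne_zero p n hn)]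

end Statement8Aux

/-- for `c ∈ 1 + qW`, the function `f(n) = (c^{n/p} − 1)/n` (if `p ∣ n`,
else `0`) takes values in `W` on `ℤ_{≥1}` and is Lipschitz there. -/
theorem statement8 (p : ℕ) [Fact p.Prime] (u c : Wp p) (hc : c = 1 + (qq p : Wp p) * u) :
    let f : ℕ → Kp p :=
      fun n => if p ∣ n then (iotaK p (c ^ (n / p)) - 1) / (n : Kp p) else 0
    (∀ n : ℕ, 1 ≤ n → f n ∈ (iotaK p).range) ∧
    (∀ n₁ n₂ : ℕ, 1 ≤ n₁ → 1 ≤ n₂ → ∀ m : ℕ,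
      (p : ℤ) ^ m ∣ (n₁ : ℤ) - (n₂ : ℤ) →
        ∃ w : Wp p, f n₁ - f n₂ = (p : Kp p) ^ m * iotaK p w) := by
  intro f
  have hf : ∀ n, f n = F8 p c n := fun n => rfl
  constructor
  · intro n hn
    rw [hf]
    by_cases hpn : p ∣ n
    · obtain ⟨w, -, hw2⟩ := F8_spec p u c hc n (by omega) hpn
      rw [hw2]
      exact RingHom.mem_range_self _ w
    · rw [F8, if_neg hpn]
      exact ⟨0, by simp⟩
  · intro n₁ n₂ h₁ h₂ m hdvd
    rw [hf, hf]
    by_cases hp₁ : p ∣ n₁ <;> by_cases hp₂ : p ∣ n₂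
    · -- both divisible
      obtain ⟨w₁, hw₁, hfw₁⟩ := F8_spec p u c hc n₁ (by omega) hp₁
      obtain ⟨w₂, hw₂, hfw₂⟩ := F8_spec p u c hc n₂ (by omega) hp₂
      rcases Nat.eq_zero_or_pos m with rfl | hm
      · refine ⟨w₁ - w₂, ?_⟩
        rw [hfw₁, hfw₂, ← map_sub]
        simp
      obtain ⟨m', rfl⟩ : ∃ m', m = m' + 1 := ⟨m - 1, by omega⟩
      have hn₁ : p * (n₁ / p) = n₁ := Nat.mul_div_cancel' hp₁
      have hn₂ : p * (n₂ / p) = n₂ := Nat.mul_div_cancel' hp₂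
      have hk₁ : n₁ / p ≠ 0 := by
        intro h0; rw [h0] at hn₁; omega
      have hk₂ : n₂ / p ≠ 0 := by
        intro h0; rw [h0] at hn₂; omega
      have hkdvd : (p : ℤ) ^ m' ∣ (n₁ / p : ℕ) - ((n₂ / p : ℕ) : ℤ) := by
        have hpz : (p : ℤ) ≠ 0 := by exact_mod_cast (Fact.out : p.Prime).ne_zero
        have hmul : (p : ℤ) * ((p : ℤ) ^ m') ∣ (p : ℤ) * (((n₁ / p : ℕ) : ℤ) - ((n₂ / p : ℕ) : ℤ)) := by
          rw [← pow_succ']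
          have e₁ : ((n₁ : ℕ) : ℤ) = (p : ℤ) * ((n₁ / p : ℕ) : ℤ) := by
            conv_lhs => rw [← hn₁]
            rw [Nat.cast_mul]
          have e₂ : ((n₂ : ℕ) : ℤ) = (p : ℤ) * ((n₂ / p : ℕ) : ℤ) := by
            conv_lhs => rw [← hn₂]
            rw [Nat.cast_mul]
          calc (p : ℤ) ^ (m' + 1) ∣ (n₁ : ℤ) - (n₂ : ℤ) := hdvd
            _ = (p : ℤ) * (((n₁ / p : ℕ) : ℤ) - ((n₂ / p : ℕ) : ℤ)) := by
                rw [e₁, e₂]; ring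
        exact (mul_dvd_mul_iff_left hpz).mp hmul
      rcases le_total (n₂ / p) (n₁ / p) with hle | hle
      · have hDn : p ^ m' ∣ n₁ / p - n₂ / p := by
          have hz : (p : ℤ) ^ m' ∣ ((n₁ / p - n₂ / p : ℕ) : ℤ) := by
            rwa [Nat.cast_sub hle]
          exact_mod_cast hz
        obtain ⟨z, hz⟩ := lemC p u c hc (n₁ / p) (n₂ / p) m' hk₁ hk₂ hle hDn w₁ w₂ hw₁ hw₂
        refine ⟨z, ?_⟩
        rw [hfw₁, hfw₂, ← map_sub, hz, map_mul, map_pow, map_natCast]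
      · have hDn : p ^ m' ∣ n₂ / p - n₁ / p := by
          have hz : (p : ℤ) ^ m' ∣ ((n₂ / p - n₁ / p : ℕ) : ℤ) := by
            rw [Nat.cast_sub hle]
            exact dvd_sub_comm.mp hkdvd
          exact_mod_cast hz
        obtain ⟨z, hz⟩ := lemC p u c hc (n₂ / p) (n₁ / p) m' hk₂ hk₁ hle hDn w₂ w₁ hw₂ hw₁
        refine ⟨-z, ?_⟩
        rw [hfw₁, hfw₂, ← map_sub]
        have hz' : w₁ - w₂ = (p : Wp p) ^ (m' + 1) * (-z) := by linear_combination -hz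
        rw [hz', map_mul, map_pow, map_natCast]
    · -- p ∣ n₁, ¬ p ∣ n₂
      have hm0 : m = 0 := by
        by_contra hm
        have ha : (p : ℤ) ∣ (n₁ : ℤ) - (n₂ : ℤ) := dvd_trans (dvd_pow_self (p : ℤ) hm) hdvd
        have hb : (p : ℤ) ∣ (n₁ : ℤ) := Int.natCast_dvd_natCast.mpr hp₁
        have hd := dvd_sub hb ha
        rw [sub_sub_cancel] at hd
        exact hp₂ (Int.natCast_dvd_natCast.mp hd)
      subst hm0
      obtain ⟨w, -, hfw⟩ := F8_spec p u c hc n₁ (by omega) hp₁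
      refine ⟨w, ?_⟩
      rw [hfw, F8, if_neg hp₂]
      simp
    · -- ¬ p ∣ n₁, p ∣ n₂
      have hm0 : m = 0 := by
        by_contra hm
        have ha : (p : ℤ) ∣ (n₁ : ℤ) - (n₂ : ℤ) := dvd_trans (dvd_pow_self (p : ℤ) hm) hdvd
        have hb : (p : ℤ) ∣ (n₂ : ℤ) := Int.natCast_dvd_natCast.mpr hp₂
        have hd := dvd_add hb ha
        have hd2 : (p : ℤ) ∣ (n₁ : ℤ) := by simpa using hd
        exact hp₁ (Int.natCast_dvd_natCast.mp hd2)
      subst hm0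
      obtain ⟨w, -, hfw⟩ := F8_spec p u c hc n₂ (by omega) hp₂
      refine ⟨-w, ?_⟩
      rw [hfw]
      rw [show F8 p c n₁ = 0 from by rw [F8, if_neg hp₁]]
      simp
    · exact ⟨0, by rw [F8, if_neg hp₁, F8, if_neg hp₂]; simp⟩

end HGP
end
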